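/- arXiv:1006.5704 — 2 statements merged into one kernel-verified Lean document; each statement's English description precedes it below -/
import Mathlib

section
/- With the setup described in the context (initial society determined by the interval function I, friendship within list-distance s−1, and the C_j coming from a First-Fit chain partition extended by empty chains), for every index i with 0 ≤ i ≤ n we have ⋃_{X ∈ S_i} X ⊇ ⋃_{j > i} C_j; that is, every element of P that lies in a chain C_j with j > i belongs to some group of S_i. -/
open scoped Classical

/-- `X` makes a transition of type α from `S (j-1)` to `S j`:
`X` belongs to the list `S (j-1)` and has non-empty intersection with the chain `C j`. -/
def TransAlpha {α : Type*} (S : ℕ → List (Set α)) (C : ℕ → Set α)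
    (j : ℕ) (X : Set α) : Prop :=
  X ∈ S (j - 1) ∧ (X ∩ C j).Nonempty

/-- `X` makes a transition of type β from `S (j-1)` to `S j`:
condition α fails, but some friend of `X` in the `t`-society `(S (j-1), F (j-1))`
has non-empty intersection with `C j`. -/
def TransBeta {α : Type*} (S : ℕ → List (Set α)) (F : ℕ → Set α → ℕ → Option (Set α))
    (C : ℕ → Set α) (t j : ℕ) (X : Set α) : Prop :=
  X ∈ S (j - 1) ∧ ¬ (X ∩ C j).Nonempty ∧
    ∃ k < t, ∃ Y, F (j - 1) X k = some Y ∧ (Y ∩ C j).Nonempty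

/-- `N^α_{i,j}(X)`: the number of indices `l` with `i < l ≤ j` such that `X` makes a
transition of type α from `S (l-1)` to `S l`. -/
noncomputable def NAlpha {α : Type*} (S : ℕ → List (Set α)) (C : ℕ → Set α)
    (i j : ℕ) (X : Set α) : ℕ :=
  ((Finset.Ioc i j).filter fun l => TransAlpha S C l X).card

/-- `X` makes a transition of type γ from `S (j-1)` to `S j`:
conditions α and β fail, but there is `i ≤ j - 1` with `N^α_{i,j-1}(X) > ε (j - i)`,
where `ε = 1 / (2 t)`. -/
def TransGamma {α : Type*} (S : ℕ → List (Set α)) (F : ℕ → Set α → ℕ → Option (Set α))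
    (C : ℕ → Set α) (t j : ℕ) (X : Set α) : Prop :=
  X ∈ S (j - 1) ∧ ¬ (X ∩ C j).Nonempty ∧
    ¬ (∃ k < t, ∃ Y, F (j - 1) X k = some Y ∧ (Y ∩ C j).Nonempty) ∧
    ∃ i ≤ j - 1, (NAlpha S C i (j - 1) X : ℝ) > (1 / (2 * (t : ℝ))) * ((j : ℝ) - (i : ℝ))

/-- **Lemma 5 (coverage).**  With the initial society determined by the interval function `I`,
friendship within list-distance `s - 1`, and the `C j` coming from a First-Fit chain partition
extended by empty chains: for every `i ≤ n`, every element of `P` lying in a chain `C j` with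
`j > i` belongs to some group of `S i`, i.e. `⋃_{X ∈ S i} X ⊇ ⋃_{j > i} C j`. -/
theorem union_groups_superset_union_later_chains
    {α : Type*} [PartialOrder α] [Fintype α]
    (r s q m n : ℕ) (t : ℕ) (hr : 2 ≤ r) (hs : 2 ≤ s) (ht : t = 2 * (s - 1))
    -- `P` is `(𝐫 + 𝐬)`-free
    (hfree : ¬ ∃ A B : Finset α, A.card = r ∧ B.card = s ∧ Disjoint A B ∧
      IsChain (· ≤ ·) (A : Set α) ∧ IsChain (· ≤ ·) (B : Set α) ∧
      ∀ a ∈ A, ∀ b ∈ B, ¬ a ≤ b ∧ ¬ b ≤ a)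
    -- `q` is the height of `P`
    (hq : IsGreatest {k | ∃ c : Finset α, c.card = k ∧ IsChain (· ≤ ·) (c : Set α)} q)
    -- `C 1, …, C m` is a First-Fit chain partition of `P`, and `C j = ∅` for `j > m`
    (C : ℕ → Set α)
    (hCne : ∀ j, 1 ≤ j → j ≤ m → (C j).Nonempty)
    (hCchain : ∀ j, 1 ≤ j → j ≤ m → IsChain (· ≤ ·) (C j))
    (hCdisj : ∀ i j, 1 ≤ i → j ≤ m → i ≠ j → Disjoint (C i) (C j))
    (hCcover : ∀ x : α, ∃ j, 1 ≤ j ∧ j ≤ m ∧ x ∈ C j)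
    (hFF : ∀ i j, 1 ≤ i → i < j → j ≤ m → ∀ x ∈ C j, ∃ z ∈ C i, ¬ x ≤ z ∧ ¬ z ≤ x)
    (hCempty : ∀ j, m < j → C j = ∅)
    -- `I` assigns to each `x ∈ P` a non-empty set `I x ⊆ {1, …, q}` of consecutive
    -- integers with properties (1) and (2) of the structural lemma
    (I : α → Finset ℕ)
    (hIne : ∀ x, (I x).Nonempty)
    (hIsub : ∀ x, I x ⊆ Finset.Icc 1 q)
    (hIcons : ∀ x, ∃ a b : ℕ, I x = Finset.Icc a b)
    (hIheight : ∀ k : ℕ, ∀ c : Finset α, (∀ x ∈ c, k ∈ I x) →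
      IsChain (· ≤ ·) (c : Set α) → c.card ≤ r - 1)
    (hIgap : ∀ x y : α, ¬ x ≤ y → ¬ y ≤ x →
      (I x ∩ I y).Nonempty ∨
      Set.ncard {k : ℕ |
        ((∀ a ∈ I x, a < k) ∧ (∀ b ∈ I y, k < b)) ∨
        ((∀ b ∈ I y, b < k) ∧ (∀ a ∈ I x, k < a))} ≤ s - 2)
    -- the evolution `(S 0, F 0), …, (S n, F n)` of `t`-societies
    (S : ℕ → List (Set α)) (F : ℕ → Set α → ℕ → Option (Set α))
    -- `S 0` is the list `X 1, …, X q`, where `X k = {x | k ∈ I x}`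
    (hS0 : S 0 = (List.range q).map fun k => {x : α | k + 1 ∈ I x})
    -- each `S j` is a sublist of `S 0` (retaining the order of `S 0`), and the lists decrease
    (hsub : ∀ j, j ≤ n → (S j).Sublist (S 0))
    (hmono : ∀ j, 1 ≤ j → j ≤ n → (S j).Sublist (S (j - 1)))
    -- a group of `S (j-1)` belongs to `S j` iff it makes a transition of type α, β or γ
    (hrule : ∀ j, 1 ≤ j → j ≤ n → ∀ X ∈ S (j - 1),
      (X ∈ S j ↔ TransAlpha S C j X ∨ TransBeta S F C t j X ∨ TransGamma S F C t j X))
    -- distinct groups of `S j` at list-distance at most `s - 1` list each other as friends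
    (hfriend : ∀ j, j ≤ n → ∀ p₁ p₂ : ℕ, p₁ < p₂ → p₂ - p₁ ≤ s - 1 →
      ∀ Y Z : Set α, (S j)[p₁]? = some Y → (S j)[p₂]? = some Z → Y ≠ Z →
        (∃ k < t, F j Y k = some Z) ∧ (∃ k < t, F j Z k = some Y))
    :
    ∀ i, i ≤ n → ∀ j, i < j → ∀ y ∈ C j, ∃ X ∈ S i, y ∈ X 
    := by
  intro i
  induction i with
  | zero =>
    intro _ j hj y hy
    obtain ⟨k, hk⟩ := hIne y
    have hk' := hIsub y hk
    rw [Finset.mem_Icc] at hk'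
    refine ⟨{x : α | k ∈ I x}, ?_, hk⟩
    rw [hS0, List.mem_map]
    refine ⟨k - 1, by simp; omega, ?_⟩
    have : k - 1 + 1 = k := by omega
    rw [this]
  | succ i IH =>
    intro hin j hj y hy
    have hin' : i ≤ n := by omega
    have hjm : j ≤ m := by
      by_contra h
      rw [hCempty j (by omega)] at hy
      exact hy
    obtain ⟨z, hzC, hyz, hzy⟩ := hFF (i+1) j (by omega) hj hjm y hy
    obtain ⟨X0, hX0, hyX0⟩ := IH hin' j (by omega) y hy
    obtain ⟨Z0, hZ0, hzZ0⟩ := IH hin' (i+1) (Nat.lt_succ_self i) z hzC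
    -- the order embedding coming from `S i <+ S 0`
    obtain ⟨f, hf⟩ := List.sublist_iff_exists_orderEmbedding_getElem?_eq.mp (hsub i hin')
    have hf' : ∀ p : ℕ, (S i)[p]? = (S 0)[f p]? := by
      intro p
      exact hf p
    have key : ∀ (p : ℕ) (W : Set α), (S i)[p]? = some W →
        f p < q ∧ W = {x : α | f p + 1 ∈ I x} := by
      intro p W hW
      have h1 : (S 0)[f p]? = some W := by rw [← hf' p]; exact hW
      rw [hS0] at h1
      rcases List.getElem?_eq_some_iff.mp h1 with ⟨hl, hv⟩
      simp at hl hv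
      exact ⟨hl, hv.symm⟩
    -- α-transition helper
    have halpha : ∀ X : Set α, X ∈ S i → (X ∩ C (i+1)).Nonempty → X ∈ S (i+1) := by
      intro X hXmem hne
      have hmem' : X ∈ S (i + 1 - 1) := by simpa using hXmem
      exact (hrule (i+1) (by omega) hin X hmem').mpr
        (Or.inl ⟨hmem', hne⟩)
    -- interval helpers
    have hout₁ : ∀ (w : α) (k l : ℕ), k ∈ I w → l ∉ I w → k < l → ∀ a ∈ I w, a < l := by
      intro w k l hk hl hkl a ha
      obtain ⟨lo, hi, hE⟩ := hIcons w
      rw [hE, Finset.mem_Icc] at hk ha hl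
      omega
    have hout₂ : ∀ (w : α) (k l : ℕ), k ∈ I w → l ∉ I w → l < k → ∀ a ∈ I w, l < a := by
      intro w k l hk hl hkl a ha
      obtain ⟨lo, hi, hE⟩ := hIcons w
      rw [hE, Finset.mem_Icc] at hk ha hl
      omega
    -- main inner induction on the distance between positions
    suffices H : ∀ (d pX pZ : ℕ) (X Z : Set α), (S i)[pX]? = some X → (S i)[pZ]? = some Z →
        y ∈ X → z ∈ Z → max pX pZ - min pX pZ ≤ d → ∃ X' ∈ S (i+1), y ∈ X' by
      obtain ⟨pX, hpX⟩ := List.mem_iff_getElem?.mp hX0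
      obtain ⟨pZ, hpZ⟩ := List.mem_iff_getElem?.mp hZ0
      exact H (max pX pZ - min pX pZ) pX pZ X0 Z0 hpX hpZ hyX0 hzZ0 le_rfl
    intro d
    induction d with
    | zero =>
      intro pX pZ X Z hpX hpZ hyX hzZ hdist
      have hpp : pX = pZ := by omega
      subst hpp
      have hXZ : X = Z := by
        rw [hpX] at hpZ; exact Option.some.inj hpZ
      subst hXZ
      exact ⟨X, halpha X (List.mem_of_getElem? hpX) ⟨z, hzZ, hzC⟩, hyX⟩
    | succ d IHd =>
      intro pX pZ X Z hpX hpZ hyX hzZ hdist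
      have hXmem : X ∈ S i := List.mem_of_getElem? hpX
      by_cases hXC : (X ∩ C (i+1)).Nonempty
      · exact ⟨X, halpha X hXmem hXC, hyX⟩
      have hZC : (Z ∩ C (i+1)).Nonempty := ⟨z, hzZ, hzC⟩
      have hXZ : X ≠ Z := by
        rintro rfl; exact hXC hZC
      have hpp : pX ≠ pZ := by
        rintro rfl; rw [hpX] at hpZ; exact hXZ (Option.some.inj hpZ)
      by_cases hd : max pX pZ - min pX pZ ≤ s - 1
      · -- β-transition via friendship
        have hFZ : ∃ k < t, F i X k = some Z := by
          rcases lt_or_gt_of_ne hpp with h | h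
          · exact (hfriend i hin' pX pZ h (by omega) X Z hpX hpZ hXZ).1
          · exact (hfriend i hin' pZ pX h (by omega) Z X hpZ hpX hXZ.symm).2
        obtain ⟨k, hk, hFk⟩ := hFZ
        have hmem' : X ∈ S (i + 1 - 1) := by simpa using hXmem
        have hFk' : F (i + 1 - 1) X k = some Z := by simpa using hFk
        refine ⟨X, (hrule (i+1) (by omega) hin X hmem').mpr
          (Or.inr (Or.inl ⟨hmem', hXC, k, hk, Z, hFk', hZC⟩)), hyX⟩
      · -- distance at least s : find a group strictly between, or contradiction
        by_cases hbet : ∃ (p : ℕ) (W : Set α), min pX pZ < p ∧ p < max pX pZ ∧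
            (S i)[p]? = some W ∧ (y ∈ W ∨ z ∈ W)
        · obtain ⟨p, W, hp1, hp2, hpW, hmem⟩ := hbet
          rcases hmem with hyW | hzW
          · exact IHd p pZ W Z hpW hpZ hyW hzZ (by omega)
          · exact IHd pX p X W hpX hpW hyX hzW (by omega)
        · exfalso
          push_neg at hbet
          -- named indices
          set kX := f pX + 1 with hkXdef
          set kZ := f pZ + 1 with hkZdef
          obtain ⟨hfXq, hXeq⟩ := key pX X hpX
          obtain ⟨hfZq, hZeq⟩ := key pZ Z hpZ
          have hkXy : kX ∈ I y := by rw [hXeq] at hyX; exact hyX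
          have hkZz : kZ ∈ I z := by rw [hZeq] at hzZ; exact hzZ
          have hlen : max pX pZ < (S i).length := by
            rcases lt_or_gt_of_ne hpp with h | h
            · have := (List.getElem?_eq_some_iff.mp hpZ).1; omega
            · have := (List.getElem?_eq_some_iff.mp hpX).1; omega
          set G : Set ℕ := {k : ℕ |
              ((∀ a ∈ I y, a < k) ∧ (∀ b ∈ I z, k < b)) ∨
              ((∀ b ∈ I z, b < k) ∧ (∀ a ∈ I y, k < a))} with hGdef
          have hGmem : ∀ p : ℕ, min pX pZ < p → p < max pX pZ → f p + 1 ∈ G := by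
            intro p hp1 hp2
            have hplen : p < (S i).length := by omega
            have hpW : (S i)[p]? = some ((S i)[p]'hplen) := List.getElem?_eq_getElem hplen
            set W := (S i)[p]'hplen with hWdef
            obtain ⟨hfq, hWeq⟩ := key p W hpW
            have hnyz := hbet p W hp1 hp2 hpW
            have hyW : f p + 1 ∉ I y := by
              intro h; exact hnyz.1 (by rw [hWeq]; exact h)
            have hzW : f p + 1 ∉ I z := by
              intro h; exact hnyz.2 (by rw [hWeq]; exact h)
            rcases lt_or_gt_of_ne hpp with h | h
            · -- pX < pZ : I y is to the left
              have h1 : f pX < f p := f.strictMono (by omega)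
              have h2 : f p < f pZ := f.strictMono (by omega)
              exact Or.inl ⟨hout₁ y kX (f p + 1) hkXy hyW (by omega),
                hout₂ z kZ (f p + 1) hkZz hzW (by omega)⟩
            · -- pZ < pX : I z is to the left
              have h1 : f pZ < f p := f.strictMono (by omega)
              have h2 : f p < f pX := f.strictMono (by omega)
              exact Or.inr ⟨hout₁ z kZ (f p + 1) hkZz hzW (by omega),
                hout₂ y kX (f p + 1) hkXy hyW (by omega)⟩
          -- G is finite
          have hGsub : G ⊆ Set.Ioo (min kX kZ) (max kX kZ) := by
            rintro k (⟨h1, h2⟩ | ⟨h1, h2⟩) <;>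
              simp only [Set.mem_Ioo]
            · exact ⟨by have := h1 kX hkXy; omega, by have := h2 kZ hkZz; omega⟩
            · exact ⟨by have := h1 kZ hkZz; omega, by have := h2 kX hkXy; omega⟩
          have hGfin : G.Finite := (Set.finite_Ioo _ _).subset hGsub
          -- lower bound on the size of G
          set T : Finset ℕ := (Finset.Ioo (min pX pZ) (max pX pZ)).image (fun p => f p + 1)
            with hTdef
          have hTsub : ↑T ⊆ G := by
            intro k hk
            simp only [hTdef, Finset.coe_image, Set.mem_image, Finset.mem_coe,
              Finset.mem_Ioo] at hk
            obtain ⟨p, ⟨hp1, hp2⟩, rfl⟩ := hk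
            exact hGmem p hp1 hp2
          have hTcard : T.card = max pX pZ - min pX pZ - 1 := by
            rw [hTdef, Finset.card_image_of_injective _ (fun a b hab => f.injective (by omega)),
              Nat.card_Ioo]
          have hGcard : s - 1 ≤ G.ncard := by
            have h1 : T.card ≤ G.ncard := by
              rw [← Set.ncard_coe_finset]; exact Set.ncard_le_ncard hTsub hGfin
            omega
          -- contradiction with the structural property of I
          rcases hIgap y z hyz hzy with hint | hsmall
          · obtain ⟨w, hw⟩ := hint
            rw [Finset.mem_inter] at hw
            have hone : f (min pX pZ + 1) + 1 ∈ G :=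
              hGmem (min pX pZ + 1) (by omega) (by omega)
            rcases hone with ⟨h1, h2⟩ | ⟨h1, h2⟩
            · have := h1 w hw.1; have := h2 w hw.2; omega
            · have := h1 w hw.2; have := h2 w hw.1; omega
          · rw [← hGdef] at hsmall
            omega
end

section
/- With the setup described in the context (initial society determined by the interval function I, friendship within list-distance s−1, the C_j coming from a First-Fit chain partition extended by empty chains, P non-empty, and S_n = ∅), the length of the evolution satisfies n ≥ m + 2. -/
open scoped Classical

/-- **Lemma 6 (long evolution).**  With the initial society determined by the interval
function `I`, friendship within list-distance `s - 1`, the `C j` coming from a First-Fit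
chain partition extended by empty chains, `P` non-empty, and `S n = ∅`:
the length of the evolution satisfies `n ≥ m + 2`. -/
theorem evolution_length_ge
    {α : Type*} [PartialOrder α] [Fintype α] [Nonempty α]
    (r s q m n : ℕ) (t : ℕ) (hr : 2 ≤ r) (hs : 2 ≤ s) (ht : t = 2 * (s - 1))
    -- `P` is `(𝐫 + 𝐬)`-free
    (hfree : ¬ ∃ A B : Finset α, A.card = r ∧ B.card = s ∧ Disjoint A B ∧
      IsChain (· ≤ ·) (A : Set α) ∧ IsChain (· ≤ ·) (B : Set α) ∧
      ∀ a ∈ A, ∀ b ∈ B, ¬ a ≤ b ∧ ¬ b ≤ a)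
    -- `q` is the height of `P`
    (hq : IsGreatest {k | ∃ c : Finset α, c.card = k ∧ IsChain (· ≤ ·) (c : Set α)} q)
    -- `C 1, …, C m` is a First-Fit chain partition of `P`, and `C j = ∅` for `j > m`
    (C : ℕ → Set α)
    (hCne : ∀ j, 1 ≤ j → j ≤ m → (C j).Nonempty)
    (hCchain : ∀ j, 1 ≤ j → j ≤ m → IsChain (· ≤ ·) (C j))
    (hCdisj : ∀ i j, 1 ≤ i → j ≤ m → i ≠ j → Disjoint (C i) (C j))
    (hCcover : ∀ x : α, ∃ j, 1 ≤ j ∧ j ≤ m ∧ x ∈ C j)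
    (hFF : ∀ i j, 1 ≤ i → i < j → j ≤ m → ∀ x ∈ C j, ∃ z ∈ C i, ¬ x ≤ z ∧ ¬ z ≤ x)
    (hCempty : ∀ j, m < j → C j = ∅)
    -- `I` assigns to each `x ∈ P` a non-empty set `I x ⊆ {1, …, q}` of consecutive
    -- integers with properties (1) and (2) of the structural lemma
    (I : α → Finset ℕ)
    (hIne : ∀ x, (I x).Nonempty)
    (hIsub : ∀ x, I x ⊆ Finset.Icc 1 q)
    (hIcons : ∀ x, ∃ a b : ℕ, I x = Finset.Icc a b)
    (hIheight : ∀ k : ℕ, ∀ c : Finset α, (∀ x ∈ c, k ∈ I x) →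
      IsChain (· ≤ ·) (c : Set α) → c.card ≤ r - 1)
    (hIgap : ∀ x y : α, ¬ x ≤ y → ¬ y ≤ x →
      (I x ∩ I y).Nonempty ∨
      Set.ncard {k : ℕ |
        ((∀ a ∈ I x, a < k) ∧ (∀ b ∈ I y, k < b)) ∨
        ((∀ b ∈ I y, b < k) ∧ (∀ a ∈ I x, k < a))} ≤ s - 2)
    -- the evolution `(S 0, F 0), …, (S n, F n)` of `t`-societies
    (S : ℕ → List (Set α)) (F : ℕ → Set α → ℕ → Option (Set α))
    -- `S 0` is the list `X 1, …, X q`, where `X k = {x | k ∈ I x}`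
    (hS0 : S 0 = (List.range q).map fun k => {x : α | k + 1 ∈ I x})
    -- each `S j` is a sublist of `S 0` (retaining the order of `S 0`), and the lists decrease
    (hsub : ∀ j, j ≤ n → (S j).Sublist (S 0))
    (hmono : ∀ j, 1 ≤ j → j ≤ n → (S j).Sublist (S (j - 1)))
    -- a group of `S (j-1)` belongs to `S j` iff it makes a transition of type α, β or γ
    (hrule : ∀ j, 1 ≤ j → j ≤ n → ∀ X ∈ S (j - 1),
      (X ∈ S j ↔ TransAlpha S C j X ∨ TransBeta S F C t j X ∨ TransGamma S F C t j X))
    -- distinct groups of `S j` at list-distance at most `s - 1` list each other as friends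
    (hfriend : ∀ j, j ≤ n → ∀ p₁ p₂ : ℕ, p₁ < p₂ → p₂ - p₁ ≤ s - 1 →
      ∀ Y Z : Set α, (S j)[p₁]? = some Y → (S j)[p₂]? = some Z → Y ≠ Z →
        (∃ k < t, F j Y k = some Z) ∧ (∃ k < t, F j Z k = some Y))
    -- the evolution ends with the empty society
    (hSn : S n = []) :
    m + 2 ≤ n := by
  by_contra hcon
  push_neg at hcon
  -- hcon : n < m + 2
  obtain ⟨x₀⟩ := (inferInstance : Nonempty α)
  obtain ⟨j₀, hj₀1, hj₀m, _⟩ := hCcover x₀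
  have hm1 : 1 ≤ m := hj₀1.trans hj₀m
  have hq1 : 1 ≤ q := by
    obtain ⟨k, hk⟩ := hIne x₀
    have hk2 := hIsub x₀ hk
    rw [Finset.mem_Icc] at hk2
    omega
  have ht2 : 2 ≤ t := by omega
  set X : ℕ → Set α := fun k => {y : α | k ∈ I y} with hXdef
  have hS0len : (S 0).length = q := by rw [hS0]; simp
  have hS0get : ∀ i, i < q → (S 0)[i]? = some (X (i + 1)) := by
    intro i hi
    rw [hS0, List.getElem?_map, List.getElem?_range hi]
    rfl
  -- Main invariant
  have INV : ∀ j, j ≤ m → j ≤ n → ∀ l, j ≤ l → l ≤ m → ∀ x, x ∈ C l →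
      ∃ k ∈ I x, X k ∈ S j := by
    intro j
    induction j with
    | zero =>
      intro _ _ l _ _ x _
      obtain ⟨k, hk⟩ := hIne x
      have hk2 := hIsub x hk
      rw [Finset.mem_Icc] at hk2
      refine ⟨k, hk, ?_⟩
      have hget : (S 0)[k - 1]? = some (X k) := by
        have h := hS0get (k - 1) (by omega)
        rwa [Nat.sub_add_cancel hk2.1] at h
      obtain ⟨h1, h2⟩ := List.getElem?_eq_some_iff.mp hget
      exact List.mem_iff_get.mpr ⟨⟨k - 1, h1⟩, h2⟩
    | succ j ih =>
      intro hjm hjn l hjl hlm x hx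
      have ihj : ∀ l', j ≤ l' → l' ≤ m → ∀ y, y ∈ C l' → ∃ k ∈ I y, X k ∈ S j :=
        ih (by omega) (by omega)
      have survive : ∀ Y, Y ∈ S j → ((Y ∩ C (j + 1)).Nonempty ∨
          (∃ k < t, ∃ Z, F j Y k = some Z ∧ (Z ∩ C (j + 1)).Nonempty)) → Y ∈ S (j + 1) := by
        intro Y hY hor
        have hiff := hrule (j + 1) (by omega) hjn Y hY
        rcases hor with hα | hβ
        · exact hiff.mpr (Or.inl ⟨hY, hα⟩)
        · by_cases hα : (Y ∩ C (j + 1)).Nonempty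
          · exact hiff.mpr (Or.inl ⟨hY, hα⟩)
          · exact hiff.mpr (Or.inr (Or.inl ⟨hY, hα, hβ⟩))
      rcases eq_or_lt_of_le hjl with rfl | hlt
      · -- l = j + 1 : direct α transition
        obtain ⟨k, hk, hkS⟩ := ihj (j + 1) (by omega) hlm x hx
        exact ⟨k, hk, survive _ hkS (Or.inl ⟨x, hk, hx⟩)⟩
      · -- l > j + 1
        obtain ⟨z, hzC, hxz1, hxz2⟩ := hFF (j + 1) l (by omega) hlt hlm x hx
        obtain ⟨ka, hka, hkaS⟩ := ihj l (by omega) hlm x hx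
        obtain ⟨kb, hkb, hkbS⟩ := ihj (j + 1) (by omega) (by omega) z hzC
        obtain ⟨f, hf⟩ := List.sublist_iff_exists_orderEmbedding_getElem?_eq.mp
          (hsub j (by omega))
        set L := (S j).length with hL
        have hidx : ∀ p G, (S j)[p]? = some G → f p < q ∧ G = X (f p + 1) := by
          intro p G hpG
          have h0 : (S 0)[f p]? = some G := by rw [← hf]; exact hpG
          obtain ⟨h1, _⟩ := List.getElem?_eq_some_iff.mp h0
          rw [hS0len] at h1
          have h2 := hS0get (f p) h1
          rw [h0] at h2
          exact ⟨h1, Option.some.inj h2⟩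
        set A : Finset ℕ :=
          (Finset.range L).filter (fun p => ∃ G, (S j)[p]? = some G ∧ x ∈ G) with hAdef
        set B : Finset ℕ :=
          (Finset.range L).filter (fun p => ∃ G, (S j)[p]? = some G ∧ z ∈ G) with hBdef
        have hmemA : ∀ {w : α} (k : ℕ), k ∈ I w → X k ∈ S j →
            ∃ p, p ∈ Finset.range L ∧ ∃ G, (S j)[p]? = some G ∧ w ∈ G := by
          intro w k hkw hkS
          obtain ⟨p, hp⟩ := List.mem_iff_get.mp hkS
          refine ⟨p.1, Finset.mem_range.mpr p.2, X k, ?_, hkw⟩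
          rw [List.getElem?_eq_getElem p.2]; exact congrArg some hp
        have hAne : A.Nonempty := by
          obtain ⟨p, hp1, hp2⟩ := hmemA ka hka hkaS
          exact ⟨p, Finset.mem_filter.mpr ⟨hp1, hp2⟩⟩
        have hBne : B.Nonempty := by
          obtain ⟨p, hp1, hp2⟩ := hmemA kb hkb hkbS
          exact ⟨p, Finset.mem_filter.mpr ⟨hp1, hp2⟩⟩
        obtain ⟨pq, hpq, hmin⟩ := Finset.exists_min_image (A ×ˢ B)
          (fun pq => (pq.1 - pq.2) + (pq.2 - pq.1)) (hAne.product hBne)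
        obtain ⟨pa, pb⟩ := pq
        rw [Finset.mem_product] at hpq
        obtain ⟨hpa, hpb⟩ := hpq
        obtain ⟨Ga, hGa, hxGa⟩ := (Finset.mem_filter.mp hpa).2
        obtain ⟨Gb, hGb, hzGb⟩ := (Finset.mem_filter.mp hpb).2
        have hpaL : pa < L := Finset.mem_range.mp (Finset.mem_filter.mp hpa).1
        have hpbL : pb < L := Finset.mem_range.mp (Finset.mem_filter.mp hpb).1
        obtain ⟨hfaq, hGaX⟩ := hidx pa Ga hGa
        obtain ⟨hfbq, hGbX⟩ := hidx pb Gb hGb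
        have hGamem : Ga ∈ S j := by
          obtain ⟨h1, h2⟩ := List.getElem?_eq_some_iff.mp hGa
          exact List.mem_iff_get.mpr ⟨⟨pa, h1⟩, h2⟩
        have hkaI : f pa + 1 ∈ I x := by rw [hGaX] at hxGa; exact hxGa
        have hkbI : f pb + 1 ∈ I z := by rw [hGbX] at hzGb; exact hzGb
        -- it suffices to show Ga survives
        refine ⟨f pa + 1, hkaI, ?_⟩
        rw [← hGaX]
        by_cases hpab : pa = pb
        · -- same group: α transition
          have : Ga = Gb := by
            rw [hpab] at hGa
            exact Option.some.inj (hGa.symm.trans hGb)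
          exact survive Ga hGamem (Or.inl ⟨z, by rw [this]; exact hzGb, hzC⟩)
        · -- distinct positions
          have hbetween : ∀ p, min pa pb < p → p < max pa pb →
              f p + 1 ∉ I x ∧ f p + 1 ∉ I z := by
            intro p h1 h2
            have hpL : p < L := lt_of_lt_of_le h2 (by
              rcases max_cases pa pb with ⟨h, _⟩ | ⟨h, _⟩ <;> rw [h] <;> omega)
            have hG : (S j)[p]? = some ((S j).get ⟨p, hpL⟩) := List.getElem?_eq_getElem hpL
            obtain ⟨_, hGX⟩ := hidx p _ hG
            constructor
            · intro hmemx
              have hpA : p ∈ A := Finset.mem_filter.mpr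
                ⟨Finset.mem_range.mpr hpL, ⟨_, hG, by rw [hGX]; exact hmemx⟩⟩
              have := hmin (p, pb) (Finset.mem_product.mpr ⟨hpA, hpb⟩)
              simp only at this
              omega
            · intro hmemz
              have hpB : p ∈ B := Finset.mem_filter.mpr
                ⟨Finset.mem_range.mpr hpL, ⟨_, hG, by rw [hGX]; exact hmemz⟩⟩
              have := hmin (pa, p) (Finset.mem_product.mpr ⟨hpa, hpB⟩)
              simp only at this
              omega
          have hfmono : ∀ a b : ℕ, a < b → f a < f b := fun a b h => f.strictMono h
          have hfbet : ∀ p, min pa pb < p → p < max pa pb →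
              (f pa < f p ∧ f p < f pb) ∨ (f pb < f p ∧ f p < f pa) := by
            intro p h1 h2
            rcases lt_or_gt_of_ne hpab with hord | hord
            · rw [min_eq_left hord.le] at h1
              rw [max_eq_right hord.le] at h2
              exact Or.inl ⟨hfmono _ _ h1, hfmono _ _ h2⟩
            · rw [min_eq_right hord.le] at h1
              rw [max_eq_left hord.le] at h2
              exact Or.inr ⟨hfmono _ _ h1, hfmono _ _ h2⟩
          have hminmax : min pa pb < max pa pb := by
            rcases lt_or_gt_of_ne hpab with hord | hord
            · rw [min_eq_left hord.le, max_eq_right hord.le]; exact hord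
            · rw [min_eq_right hord.le, max_eq_left hord.le]; exact hord
          obtain ⟨ax, bx, hIx⟩ := hIcons x
          obtain ⟨az, bz, hIz⟩ := hIcons z
          have hu : ax ≤ f pa + 1 ∧ f pa + 1 ≤ bx := by
            have := hkaI; rw [hIx, Finset.mem_Icc] at this; exact this
          have hv : az ≤ f pb + 1 ∧ f pb + 1 ≤ bz := by
            have := hkbI; rw [hIz, Finset.mem_Icc] at this; exact this
          -- distance bound
          have hdist : max pa pb - min pa pb ≤ s - 1 := by
            rcases hIgap x z hxz1 hxz2 with hint | hgap
            · -- intervals intersect: no position strictly between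
              obtain ⟨c, hc⟩ := hint
              rw [Finset.mem_inter, hIx, hIz, Finset.mem_Icc, Finset.mem_Icc] at hc
              have hno : max pa pb ≤ min pa pb + 1 := by
                by_contra hcon2
                push_neg at hcon2
                have h1 : min pa pb < min pa pb + 1 := by omega
                have h2 : min pa pb + 1 < max pa pb := hcon2
                obtain ⟨hnx, hnz⟩ := hbetween (min pa pb + 1) h1 h2
                rw [hIx, Finset.mem_Icc] at hnx
                rw [hIz, Finset.mem_Icc] at hnz
                rcases hfbet (min pa pb + 1) h1 h2 with ⟨e1, e2⟩ | ⟨e1, e2⟩ <;> omega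
              omega
            · -- disjoint with small gap
              set gapSet : Set ℕ := {k : ℕ |
                ((∀ a ∈ I x, a < k) ∧ (∀ b ∈ I z, k < b)) ∨
                ((∀ b ∈ I z, b < k) ∧ (∀ a ∈ I x, k < a))} with hgapSet
              set T : Finset ℕ :=
                (Finset.Ioo (min pa pb) (max pa pb)).image (fun p => f p + 1) with hT
              have hTsub : (T : Set ℕ) ⊆ gapSet := by
                intro w hw
                rw [Finset.mem_coe, hT, Finset.mem_image] at hw
                obtain ⟨p, hp, hwp⟩ := hw
                rw [Finset.mem_Ioo] at hp
                have hwp' : w = f p + 1 := hwp.symm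
                subst hwp'
                obtain ⟨hnx, hnz⟩ := hbetween p hp.1 hp.2
                rw [hIx, Finset.mem_Icc] at hnx
                rw [hIz, Finset.mem_Icc] at hnz
                have hbet := hfbet p hp.1 hp.2
                have hkey : (bx < f p + 1 ∧ f p + 1 < az) ∨
                    (bz < f p + 1 ∧ f p + 1 < ax) := by
                  rcases hbet with ⟨e1, e2⟩ | ⟨e1, e2⟩ <;> omega
                rw [hgapSet]
                rcases hkey with ⟨h1, h2⟩ | ⟨h1, h2⟩
                · left
                  constructor
                  · intro a ha; rw [hIx, Finset.mem_Icc] at ha; omega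
                  · intro b hb; rw [hIz, Finset.mem_Icc] at hb; omega
                · right
                  constructor
                  · intro b hb; rw [hIz, Finset.mem_Icc] at hb; omega
                  · intro a ha; rw [hIx, Finset.mem_Icc] at ha; omega
              have hgapfin : gapSet.Finite := by
                apply (Set.finite_Iio (bx + bz + 1)).subset
                intro w hw
                rw [hgapSet] at hw
                rcases hw with ⟨_, h2⟩ | ⟨_, h2⟩
                · have := h2 (f pb + 1) hkbI
                  exact Set.mem_Iio.mpr (by omega)
                · have := h2 (f pa + 1) hkaI
                  exact Set.mem_Iio.mpr (by omega)
              have hTcard : T.card ≤ s - 2 := by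
                have h1 : (T : Set ℕ).ncard ≤ gapSet.ncard :=
                  Set.ncard_le_ncard hTsub hgapfin
                rw [Set.ncard_coe_finset] at h1
                exact h1.trans hgap
              have hTcard2 : T.card = max pa pb - min pa pb - 1 := by
                rw [hT, Finset.card_image_of_injOn, Nat.card_Ioo]
                intro a _ b _ hab
                have hab' : f a + 1 = f b + 1 := hab
                exact f.injective (by omega)
              omega
          -- apply the friendship hypothesis
          by_cases hGG : Ga = Gb
          · exact survive Ga hGamem (Or.inl ⟨z, by rw [hGG]; exact hzGb, hzC⟩)
          · have hGa' : (S j)[pa]? = some Ga := by exact hGa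
            have hGb' : (S j)[pb]? = some Gb := by exact hGb
            rcases lt_or_gt_of_ne hpab with hord | hord
            · obtain ⟨⟨k, hkt, hFk⟩, _⟩ := hfriend j (by omega) pa pb hord
                (by omega) Ga Gb hGa' hGb' hGG
              exact survive Ga hGamem (Or.inr ⟨k, hkt, Gb, hFk, ⟨z, hzGb, hzC⟩⟩)
            · obtain ⟨_, ⟨k, hkt, hFk⟩⟩ := hfriend j (by omega) pb pa hord
                (by omega) Gb Ga hGb' hGa' (fun h => hGG h.symm)
              exact survive Ga hGamem (Or.inr ⟨k, hkt, Gb, hFk, ⟨z, hzGb, hzC⟩⟩)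
  -- Conclusion
  have hn1 : 1 ≤ n := by
    by_contra h0
    push_neg at h0
    interval_cases n
    rw [hSn] at hS0len
    simp at hS0len
    omega
  rcases le_or_gt n m with hnm | hmn
  · obtain ⟨y, hy⟩ := hCne n hn1 hnm
    obtain ⟨k, _, hkS⟩ := INV n hnm le_rfl n le_rfl hnm y hy
    rw [hSn] at hkS
    simp at hkS
  · -- n = m + 1
    have hnm1 : n = m + 1 := by omega
    obtain ⟨y, hy⟩ := hCne m hm1 le_rfl
    obtain ⟨k, hk, hkS⟩ := INV (m - 1) (by omega) (by omega) m (by omega) le_rfl y hy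
    have hα : TransAlpha S C m (X k) := ⟨hkS, ⟨y, hk, hy⟩⟩
    have hSm : X k ∈ S m := (hrule m hm1 (by omega) (X k) hkS).mpr (Or.inl hα)
    have hCn : C n = ∅ := hCempty n (by omega)
    have hSm' : X k ∈ S (n - 1) := by
      have : n - 1 = m := by omega
      rw [this]; exact hSm
    have hγ : TransGamma S F C t n (X k) := by
      refine ⟨hSm', ?_, ?_, ?_⟩
      · rw [hCn]; simp
      · rintro ⟨k', _, Y, _, hY⟩
        rw [hCn] at hY
        simp at hY
      · refine ⟨m - 1, by omega, ?_⟩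
        have hNA : NAlpha S C (m - 1) (n - 1) (X k) = 1 := by
          have hn1m : n - 1 = m := by omega
          rw [hn1m, NAlpha]
          have hIoc : Finset.Ioc (m - 1) m = {m} := by
            ext a
            rw [Finset.mem_Ioc, Finset.mem_singleton]
            omega
          rw [hIoc, Finset.filter_true_of_mem (by
            intro a ha
            rw [Finset.mem_singleton] at ha
            rw [ha]
            exact hα)]
          simp
        rw [hNA]
        have hc1 : ((m - 1 : ℕ) : ℝ) = (m : ℝ) - 1 := by
          push_cast [Nat.cast_sub hm1]
          ring
        have hc2 : ((n : ℕ) : ℝ) = (m : ℝ) + 1 := by rw [hnm1]; push_cast; ring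
        rw [hc1, hc2]
        have htR : (2 : ℝ) ≤ (t : ℝ) := by exact_mod_cast ht2
        have h2t : (0 : ℝ) < 2 * (t : ℝ) := by linarith
        have hkey : 1 / (2 * (t : ℝ)) * ((m : ℝ) + 1 - ((m : ℝ) - 1)) < 1 := by
          rw [show ((m : ℝ) + 1 - ((m : ℝ) - 1)) = 2 by ring, div_mul_eq_mul_div,
            one_mul, div_lt_one h2t]
          linarith
        simpa using hkey
    have hfinal : X k ∈ S n :=
      (hrule n hn1 le_rfl (X k) hSm').mpr (Or.inr (Or.inr hγ))
    rw [hSn] at hfinal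
    simp at hfinal
end
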